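/- Let C be a Type I binary self-dual code of length 4n+2 satisfying the hypotheses of the shadow-subtraction theorem (minimum distance d+2 with d ≡ 0 mod 4, d ≠ 0, shadow minimum weight s ≥ 3), and let C' of length 4n with doubly-even subcode C₀' and shadow S' be the subtracted code constructed there. Then every weight occurring in S' is congruent to s−1 modulo 4, and S' contains a vector of weight s−1; hence the minimum weight of S' is exactly s−1. -/

import Mathlib

open Finset

/-- Hamming weight of a binary vector. -/
def wt {n : ℕ} (v : Fin n → ZMod 2) : ℕ := (Finset.univ.filter (fun i => v i ≠ 0)).card

/-- Standard inner product over GF(2). -/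
def inn {n : ℕ} (u v : Fin n → ZMod 2) : ZMod 2 := ∑ i, u i * v i

/-- A code is self-dual if it equals its dual. -/
def IsSelfDual {n : ℕ} (C : Submodule (ZMod 2) (Fin n → ZMod 2)) : Prop :=
  ∀ v, v ∈ C ↔ ∀ c ∈ C, inn v c = 0

/-- `C` has minimum distance (weight) `d`. -/
def HasMinDist {n : ℕ} (C : Submodule (ZMod 2) (Fin n → ZMod 2)) (d : ℕ) : Prop :=
  (∃ c ∈ C, c ≠ 0 ∧ wt c = d) ∧ ∀ c ∈ C, c ≠ 0 → d ≤ wt c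

/-- The shadow `S = C₀^⊥ \ C`, where `C₀` is the doubly-even subcode of `C`. -/
def shadow {n : ℕ} (C : Submodule (ZMod 2) (Fin n → ZMod 2)) : Set (Fin n → ZMod 2) :=
  {v | ∀ c ∈ C, wt c % 4 = 0 → inn v c = 0} \ (C : Set (Fin n → ZMod 2))

/-- Covering radius of a code. -/
noncomputable def coveringRadius {n : ℕ} (C : Submodule (ZMod 2) (Fin n → ZMod 2)) : ℕ :=
  sInf {R | ∀ v : Fin n → ZMod 2, ∃ c ∈ C, wt (v - c) ≤ R}

/-- Prepend two coordinates to a vector. -/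
def vcons2 {k : ℕ} (a b : ZMod 2) (v : Fin k → ZMod 2) : Fin (k + 2) → ZMod 2 :=
  Fin.cons a (Fin.cons b v)

namespace SD

lemma zcases (x : ZMod 2) : x = 0 ∨ x = 1 := by revert x; decide

lemma addeq {x y : ZMod 2} : x + y = 0 ↔ x = y := by revert x y; decide

lemma wt_eq_sum {m : ℕ} (v : Fin m → ZMod 2) :
    wt v = ∑ i, if v i ≠ 0 then 1 else 0 := Finset.card_filter _ _

def ov {m : ℕ} (u v : Fin m → ZMod 2) : ℕ :=
  (Finset.univ.filter (fun i => u i ≠ 0 ∧ v i ≠ 0)).card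

lemma wt_add {m : ℕ} (u v : Fin m → ZMod 2) :
    wt (u + v) + 2 * ov u v = wt u + wt v := by
  have key : ∀ x y : ZMod 2,
      ((if x + y ≠ 0 then 1 else 0) + 2 * (if x ≠ 0 ∧ y ≠ 0 then 1 else 0) : ℕ)
        = (if x ≠ 0 then 1 else 0) + (if y ≠ 0 then 1 else 0) := by decide
  rw [wt_eq_sum, wt_eq_sum, wt_eq_sum, ov, Finset.card_filter, Finset.mul_sum,
    ← Finset.sum_add_distrib, ← Finset.sum_add_distrib]
  exact Finset.sum_congr rfl fun i _ => key (u i) (v i)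

lemma inn_eq_ov {m : ℕ} (u v : Fin m → ZMod 2) : inn u v = (ov u v : ZMod 2) := by
  have key : ∀ x y : ZMod 2, x * y = if x ≠ 0 ∧ y ≠ 0 then 1 else 0 := by decide
  rw [inn, ov]
  rw [Finset.sum_congr rfl fun i _ => key (u i) (v i)]
  simp [Finset.sum_boole]

lemma inn_self {m : ℕ} (u : Fin m → ZMod 2) : inn u u = (wt u : ZMod 2) := by
  have key : ∀ x : ZMod 2, x * x = if x ≠ 0 then 1 else 0 := by decide
  rw [inn, wt]
  rw [Finset.sum_congr rfl fun i _ => key (u i), Finset.sum_boole]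

lemma inn_comm {m : ℕ} (u v : Fin m → ZMod 2) : inn u v = inn v u := by
  simp [inn, mul_comm]

lemma inn_add_left {m : ℕ} (u v w : Fin m → ZMod 2) :
    inn (u + v) w = inn u w + inn v w := by
  simp [inn, add_mul, Finset.sum_add_distrib]

lemma inn_add_right {m : ℕ} (u v w : Fin m → ZMod 2) :
    inn u (v + w) = inn u v + inn u w := by
  simp [inn, mul_add, Finset.sum_add_distrib]

lemma inn_zero_left {m : ℕ} (v : Fin m → ZMod 2) : inn 0 v = 0 := by simp [inn]

lemma inn_zero_right {m : ℕ} (v : Fin m → ZMod 2) : inn v 0 = 0 := by simp [inn]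

lemma wt_zero {m : ℕ} : wt (0 : Fin m → ZMod 2) = 0 := by simp [wt]

lemma z0 (k : ℕ) : (k : ZMod 2) = 0 ↔ k % 2 = 0 := by
  rw [ZMod.natCast_eq_zero_iff]; omega

lemma z1 (k : ℕ) : (k : ZMod 2) = 1 ↔ k % 2 = 1 := by
  rcases zcases (k : ZMod 2) with h | h
  · rw [h]; rw [z0] at h; constructor
    · intro h'; exact absurd h'.symm (by decide)
    · omega
  · rw [h]; simp only [iff_true_intro rfl, true_iff]
    by_contra hk
    have : k % 2 = 0 := by omega
    rw [← z0] at this; rw [h] at this; exact absurd this (by decide)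

lemma sum_coords {m : ℕ} (v : Fin m → ZMod 2) : ∑ i, v i = (wt v : ZMod 2) := by
  have key : ∀ x : ZMod 2, x = if x ≠ 0 then 1 else 0 := by decide
  rw [wt, Finset.sum_congr rfl fun i _ => key (v i), Finset.sum_boole]

end SD

namespace SD

open Module LinearMap

def dualCode {m : ℕ} (W : Submodule (ZMod 2) (Fin m → ZMod 2)) :
    Submodule (ZMod 2) (Fin m → ZMod 2) where
  carrier := {v | ∀ c ∈ W, inn v c = 0}
  add_mem' := by
    intro a b ha hb c hc
    rw [inn_add_left, ha c hc, hb c hc, add_zero]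
  zero_mem' := fun c _ => inn_zero_left c
  smul_mem' := by
    intro a v hv c hc
    rcases zcases a with h | h <;> subst h
    · simp only [zero_smul]; exact inn_zero_left c
    · simpa using hv c hc

lemma mem_dualCode {m : ℕ} {W : Submodule (ZMod 2) (Fin m → ZMod 2)}
    {v : Fin m → ZMod 2} : v ∈ dualCode W ↔ ∀ c ∈ W, inn v c = 0 := Iff.rfl

def innB (m : ℕ) : LinearMap.BilinForm (ZMod 2) (Fin m → ZMod 2) :=
  LinearMap.mk₂ (ZMod 2) inn
    (fun a b c => inn_add_left a b c)
    (fun t a b => by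
      rcases zcases t with h | h <;> subst h <;>
        simp [inn_zero_left, zero_smul, one_smul, smul_eq_mul])
    (fun a b c => inn_add_right a b c)
    (fun t a b => by
      rcases zcases t with h | h <;> subst h <;>
        simp [inn_zero_right, zero_smul, one_smul, smul_eq_mul])

lemma innB_apply {m : ℕ} (u v : Fin m → ZMod 2) : innB m u v = inn u v := rfl

lemma innB_nondeg (m : ℕ) : (innB m).Nondegenerate := by
  refine (LinearMap.IsRefl.nondegenerate_iff_separatingLeft (B := innB m)
    (fun a b h => by rw [innB_apply, inn_comm] at h; rwa [innB_apply])).mpr ?_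
  intro v hv
  funext k
  have := hv (Pi.single k 1)
  rw [innB_apply, inn] at this
  have h2 : ∀ i, v i * (Pi.single k (1 : ZMod 2) : Fin m → ZMod 2) i = if i = k then v i else 0 := by
    intro i
    rcases eq_or_ne i k with h | h
    · subst h; simp
    · simp [Pi.single_apply, h]
  rw [Finset.sum_congr rfl fun i _ => h2 i, Finset.sum_ite_eq' Finset.univ k v] at this
  simpa using this

lemma innB_refl (m : ℕ) : (innB m).IsRefl := by
  intro a b h
  rw [innB_apply, inn_comm] at h
  rwa [innB_apply]

lemma dualCode_eq_orthogonal {m : ℕ} (W : Submodule (ZMod 2) (Fin m → ZMod 2)) :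
    dualCode W = (innB m).orthogonal W := by
  ext v
  rw [mem_dualCode, LinearMap.BilinForm.mem_orthogonal_iff]
  constructor
  · intro h c hc
    have := h c hc
    rwa [innB_apply, inn_comm]
  · intro h c hc
    have := h c hc
    rwa [innB_apply, inn_comm] at this

lemma finrank_dualCode {m : ℕ} (W : Submodule (ZMod 2) (Fin m → ZMod 2)) :
    finrank (ZMod 2) (dualCode W) = m - finrank (ZMod 2) W := by
  rw [dualCode_eq_orthogonal,
    LinearMap.BilinForm.finrank_orthogonal (innB_nondeg m) W,
    Module.finrank_fintype_fun_eq_card]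
  simp

lemma finrank_le' {m : ℕ} (W : Submodule (ZMod 2) (Fin m → ZMod 2)) :
    finrank (ZMod 2) W ≤ m := by
  have := Submodule.finrank_le W
  rwa [Module.finrank_fintype_fun_eq_card, Fintype.card_fin] at this

lemma sd_finrank {m : ℕ} {C : Submodule (ZMod 2) (Fin m → ZMod 2)}
    (hsd : IsSelfDual C) : 2 * finrank (ZMod 2) C = m := by
  have hC : C = dualCode C := by
    ext v; rw [mem_dualCode]; exact hsd v
  have h1 := finrank_dualCode C
  rw [← hC] at h1
  have := finrank_le' C
  omega

lemma finrank_ker_functional {V : Type*} [AddCommGroup V] [Module (ZMod 2) V]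
    [FiniteDimensional (ZMod 2) V] (φ : V →ₗ[ZMod 2] ZMod 2) (hsur : ∃ x, φ x = 1) :
    finrank (ZMod 2) (LinearMap.ker φ) + 1 = finrank (ZMod 2) V := by
  have hr : LinearMap.range φ = ⊤ := by
    rw [Submodule.eq_top_iff']
    intro x
    obtain ⟨v, hv⟩ := hsur
    have : x • φ v ∈ LinearMap.range φ := Submodule.smul_mem _ x (LinearMap.mem_range_self φ v)
    rwa [hv, smul_eq_mul, mul_one] at this
  have := LinearMap.finrank_range_add_finrank_ker φ
  rw [hr, finrank_top] at this
  rw [Module.finrank_self] at this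
  omega

end SD

namespace SD

open Module LinearMap

variable {m : ℕ} {D : Submodule (ZMod 2) (Fin m → ZMod 2)}

lemma sd_inn (hsd : IsSelfDual D) {a b : Fin m → ZMod 2} (ha : a ∈ D) (hb : b ∈ D) :
    inn a b = 0 := (hsd a).mp ha b hb

lemma sd_wt_even (hsd : IsSelfDual D) {a : Fin m → ZMod 2} (ha : a ∈ D) :
    wt a % 2 = 0 := by
  have := sd_inn hsd ha ha
  rw [inn_self, z0] at this
  exact this

lemma sd_wt_add4 (hsd : IsSelfDual D) {a b : Fin m → ZMod 2} (ha : a ∈ D) (hb : b ∈ D) :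
    wt (a + b) % 4 = (wt a + wt b) % 4 := by
  have h1 := wt_add a b
  have h2 := sd_inn hsd ha hb
  rw [inn_eq_ov, z0] at h2
  omega

lemma allOnes_mem (hsd : IsSelfDual D) : (fun _ => (1 : ZMod 2)) ∈ D := by
  rw [hsd]
  intro c hc
  have : inn (fun _ => (1 : ZMod 2)) c = ∑ i, c i := by
    simp [inn]
  rw [this, sum_coords, z0]
  exact sd_wt_even hsd hc

lemma wt_allOnes : wt (fun _ => (1 : ZMod 2) : Fin m → ZMod 2) = m := by
  simp [wt]

/-- F1: a shadow vector has inner product 1 with every singly-even codeword. -/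
lemma shadow_inn_odd (hsd : IsSelfDual D) {u c : Fin m → ZMod 2}
    (hu : u ∈ shadow D) (hc : c ∈ D) (h2 : wt c % 4 = 2) : inn u c = 1 := by
  obtain ⟨hu1, hu2⟩ := hu
  have hnotall : ¬ ∀ c' ∈ D, inn u c' = 0 := fun h => hu2 ((hsd u).mpr h)
  push_neg at hnotall
  obtain ⟨c₂, hc₂, hic₂⟩ := hnotall
  have hic₂1 : inn u c₂ = 1 := by
    rcases zcases (inn u c₂) with h | h
    · exact absurd h hic₂
    · exact h
  have hc₂4 : wt c₂ % 4 = 2 := by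
    have he := sd_wt_even hsd hc₂
    rcases Nat.lt_or_ge (wt c₂ % 4) 4 with h4 | h4
    · by_contra hne
      have h0 : wt c₂ % 4 = 0 := by omega
      exact hic₂ (hu1 c₂ hc₂ h0)
    · omega
  have hsum : c + c₂ ∈ D := D.add_mem hc hc₂
  have hsum4 : wt (c + c₂) % 4 = 0 := by
    rw [sd_wt_add4 hsd hc hc₂]; omega
  have h0 := hu1 (c + c₂) hsum hsum4
  rw [inn_add_right, hic₂1] at h0
  rcases zcases (inn u c) with h | h
  · rw [h] at h0; simp at h0
  · exact h

lemma shadow_wt_even (hsd : IsSelfDual D) {u : Fin m → ZMod 2}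
    (hu : u ∈ shadow D) (hm : m % 4 = 0) : wt u % 2 = 0 := by
  have h1 := allOnes_mem hsd
  have h4 : wt (fun _ => (1 : ZMod 2) : Fin m → ZMod 2) % 4 = 0 := by
    rw [wt_allOnes]; exact hm
  have := hu.1 _ h1 h4
  have heq : inn u (fun _ => (1 : ZMod 2)) = (wt u : ZMod 2) := by
    rw [inn]
    simp only [mul_one]
    exact sum_coords u
  rw [heq, z0] at this
  exact this

lemma shadow_wt_odd (hsd : IsSelfDual D) {u : Fin m → ZMod 2}
    (hu : u ∈ shadow D) (hm : m % 4 = 2) : wt u % 2 = 1 := by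
  have h1 := allOnes_mem hsd
  have h4 : wt (fun _ => (1 : ZMod 2) : Fin m → ZMod 2) % 4 = 2 := by
    rw [wt_allOnes]; exact hm
  have := shadow_inn_odd hsd hu h1 h4
  have heq : inn u (fun _ => (1 : ZMod 2)) = (wt u : ZMod 2) := by
    rw [inn]
    simp only [mul_one]
    exact sum_coords u
  rw [heq, z1] at this
  exact this

/-- the sum of two shadow vectors lies in the code. -/
lemma shadow_add_mem (hsd : IsSelfDual D) (hT : ∃ c ∈ D, wt c % 4 = 2)
    {u w : Fin m → ZMod 2} (hu : u ∈ shadow D) (hw : w ∈ shadow D) : u + w ∈ D := by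
  classical
  -- the doubly-even subcode as kernel of a functional on D
  have hphi_add : ∀ a b : D, ((if wt ((a + b : D) : Fin m → ZMod 2) % 4 = 0 then 0 else 1 : ZMod 2))
      = (if wt (a : Fin m → ZMod 2) % 4 = 0 then 0 else 1)
        + (if wt (b : Fin m → ZMod 2) % 4 = 0 then 0 else 1) := by
    intro a b
    have hcoe : ((a + b : D) : Fin m → ZMod 2) = (a : Fin m → ZMod 2) + (b : Fin m → ZMod 2) := rfl
    rw [hcoe]
    set A := wt (a : Fin m → ZMod 2) with hA
    set B := wt (b : Fin m → ZMod 2) with hB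
    set S := wt ((a : Fin m → ZMod 2) + (b : Fin m → ZMod 2)) with hS
    have hab : S % 4 = (A + B) % 4 := sd_wt_add4 hsd a.2 b.2
    have hea : A % 2 = 0 := sd_wt_even hsd a.2
    have heb : B % 2 = 0 := sd_wt_even hsd b.2
    have hxa : A % 4 = 0 ∨ A % 4 = 2 := by omega
    have hxb : B % 4 = 0 ∨ B % 4 = 2 := by omega
    rcases hxa with h | h <;> rcases hxb with h' | h'
    · rw [if_pos h, if_pos h', if_pos (by omega : S % 4 = 0)]; norm_num
    · rw [if_pos h, if_neg (by omega : ¬ S % 4 = 0), if_neg (by omega : ¬ B % 4 = 0)]; norm_num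
    · rw [if_pos h', if_neg (by omega : ¬ S % 4 = 0), if_neg (by omega : ¬ A % 4 = 0)]; norm_num
    · rw [if_pos (by omega : S % 4 = 0), if_neg (by omega : ¬ A % 4 = 0), if_neg (by omega : ¬ B % 4 = 0)]; decide
  let φ : D →ₗ[ZMod 2] ZMod 2 :=
    { toFun := fun c => if wt (c : Fin m → ZMod 2) % 4 = 0 then 0 else 1
      map_add' := hphi_add
      map_smul' := by
        intro t c
        rcases zcases t with h | h <;> subst h
        · have h0 : ((0 : ZMod 2) • c : D) = 0 := by simp
          rw [h0]
          simp [wt_zero]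
        · simp }
  have hφ : ∀ c : D, φ c = if wt (c : Fin m → ZMod 2) % 4 = 0 then 0 else 1 := fun _ => rfl
  obtain ⟨c₂, hc₂, hc₂4⟩ := hT
  have hsur : ∃ x, φ x = 1 := by
    refine ⟨⟨c₂, hc₂⟩, ?_⟩
    show (if wt c₂ % 4 = 0 then (0 : ZMod 2) else 1) = 1
    rw [if_neg (by omega)]
  have hfr : finrank (ZMod 2) (LinearMap.ker φ) + 1 = finrank (ZMod 2) D :=
    finrank_ker_functional φ hsur
  set D0 : Submodule (ZMod 2) (Fin m → ZMod 2) := Submodule.map D.subtype (LinearMap.ker φ) with hD0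
  have hD0mem : ∀ x, x ∈ D0 ↔ x ∈ D ∧ wt x % 4 = 0 := by
    intro x
    constructor
    · rintro ⟨⟨c, hc⟩, hck, rfl⟩
      have hck' : (if wt c % 4 = 0 then (0 : ZMod 2) else 1) = 0 := hck
      refine ⟨hc, ?_⟩
      show wt c % 4 = 0
      by_contra hne
      rw [if_neg hne] at hck'
      exact one_ne_zero hck'
    · rintro ⟨hx, hx4⟩
      refine ⟨⟨x, hx⟩, ?_, rfl⟩
      show (if wt x % 4 = 0 then (0 : ZMod 2) else 1) = 0
      exact if_pos hx4
  have hfrD0 : finrank (ZMod 2) D0 = finrank (ZMod 2) (LinearMap.ker φ) := by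
    rw [hD0]
    exact Submodule.finrank_map_subtype_eq D (LinearMap.ker φ)
  -- everything relevant sits inside dualCode D0
  have hDle : D ≤ dualCode D0 := by
    intro c hc
    rw [mem_dualCode]
    intro c' hc'
    exact sd_inn hsd hc ((hD0mem c').mp hc').1
  have huD : u ∈ dualCode D0 := by
    rw [mem_dualCode]
    intro c' hc'
    obtain ⟨h1, h2⟩ := (hD0mem c').mp hc'
    exact hu.1 c' h1 h2
  have hwD : w ∈ dualCode D0 := by
    rw [mem_dualCode]
    intro c' hc'
    obtain ⟨h1, h2⟩ := (hD0mem c').mp hc'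
    exact hw.1 c' h1 h2
  by_cases hw2 : w ∈ D ⊔ Submodule.span (ZMod 2) {u}
  · rw [Submodule.mem_sup] at hw2
    obtain ⟨c, hc, z, hz, rfl⟩ := hw2
    rw [Submodule.mem_span_singleton] at hz
    obtain ⟨t, rfl⟩ := hz
    rcases zcases t with h | h <;> subst h
    · rw [zero_smul, add_zero] at hw ⊢
      exact absurd hc hw.2
    · rw [one_smul]
      have : u + (c + u) = c := by
        rw [add_comm c u, ← add_assoc]
        have huu : u + u = 0 := by
          funext k
          simp [CharTwo.add_self_eq_zero]
        rw [huu, zero_add]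
      rw [this]
      exact hc
  · exfalso
    have huD2 : u ∉ D := hu.2
    have hlt1 : D < D ⊔ Submodule.span (ZMod 2) {u} := by
      refine lt_of_le_of_ne le_sup_left ?_
      intro heq
      have : u ∈ D ⊔ Submodule.span (ZMod 2) {u} :=
        Submodule.mem_sup_right (Submodule.mem_span_singleton_self u)
      rw [← heq] at this
      exact huD2 this
    have hlt2 : D ⊔ Submodule.span (ZMod 2) {u} <
        (D ⊔ Submodule.span (ZMod 2) {u}) ⊔ Submodule.span (ZMod 2) {w} := by
      refine lt_of_le_of_ne le_sup_left ?_
      intro heq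
      have : w ∈ (D ⊔ Submodule.span (ZMod 2) {u}) ⊔ Submodule.span (ZMod 2) {w} :=
        Submodule.mem_sup_right (Submodule.mem_span_singleton_self w)
      rw [← heq] at this
      exact hw2 this
    have hle : (D ⊔ Submodule.span (ZMod 2) {u}) ⊔ Submodule.span (ZMod 2) {w} ≤ dualCode D0 := by
      refine sup_le (sup_le hDle ?_) ?_
      · rw [Submodule.span_le, Set.singleton_subset_iff]; exact huD
      · rw [Submodule.span_le, Set.singleton_subset_iff]; exact hwD
    have h1 := Submodule.finrank_lt_finrank_of_lt hlt1
    have h2 := Submodule.finrank_lt_finrank_of_lt hlt2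
    have h3 := Submodule.finrank_mono hle
    have h4 := finrank_dualCode D0
    have h5 := sd_finrank hsd
    have h6 := finrank_le' D0
    omega

end SD

namespace SD

variable {m : ℕ} {D : Submodule (ZMod 2) (Fin m → ZMod 2)}

/-- All weights in the shadow of a Type I self-dual code are congruent mod 4. -/
lemma shadow_wt_cong (hsd : IsSelfDual D) (hT : ∃ c ∈ D, wt c % 4 = 2)
    {u w : Fin m → ZMod 2} (hu : u ∈ shadow D) (hw : w ∈ shadow D) :
    wt u % 4 = wt w % 4 := by
  have hc : u + w ∈ D := shadow_add_mem hsd hT hu hw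
  have e1 : wt (u + w) + 2 * ov u w = wt u + wt w := wt_add u w
  have hce : wt (u + w) % 2 = 0 := sd_wt_even hsd hc
  have hinn : inn u (u + w) = (wt u : ZMod 2) + (ov u w : ZMod 2) := by
    rw [inn_add_right, inn_self, inn_eq_ov]
  rcases Nat.lt_or_ge (wt (u + w) % 4) 4 with h4 | h4
  swap
  · omega
  by_cases hc4 : wt (u + w) % 4 = 0
  · have h0 := hu.1 (u + w) hc hc4
    rw [hinn] at h0
    have : ((wt u + ov u w : ℕ) : ZMod 2) = 0 := by push_cast; rw [h0]
    rw [z0] at this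
    omega
  · have hc2 : wt (u + w) % 4 = 2 := by omega
    have h1 := shadow_inn_odd hsd hu hc hc2
    rw [hinn] at h1
    have : ((wt u + ov u w : ℕ) : ZMod 2) = 1 := by push_cast; rw [h1]
    rw [z1] at this
    omega

/-- Splitting a sum over all coordinates into the two special ones and the rest. -/
lemma sum_split {M : Type*} [AddCommMonoid M] {N K : ℕ} {i j : Fin N} (hij : i ≠ j)
    {f : Fin K → Fin N} (hf : Function.Injective f)
    (hr : Set.range f = ({i, j} : Set (Fin N))ᶜ) (F : Fin N → M) :
    ∑ k, F k = F i + F j + ∑ t, F (f t) := by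
  classical
  have hmem : ∀ t, f t ∉ ({i, j} : Finset (Fin N)) := by
    intro t
    have : f t ∈ Set.range f := Set.mem_range_self t
    rw [hr] at this
    simp only [Set.mem_compl_iff, Set.mem_insert_iff, Set.mem_singleton_iff] at this
    simp only [Finset.mem_insert, Finset.mem_singleton]
    tauto
  have h2 : ∑ k ∈ ({i, j} : Finset (Fin N))ᶜ, F k = ∑ t, F (f t) := by
    refine (Finset.sum_bij (fun t _ => f t) ?_ ?_ ?_ ?_).symm
    · intro t _
      rw [Finset.mem_compl]
      exact hmem t
    · intro a _ b _ h
      exact hf h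
    · intro k hk
      rw [Finset.mem_compl] at hk
      have : k ∈ Set.range f := by
        rw [hr]
        simp only [Set.mem_compl_iff, Set.mem_insert_iff, Set.mem_singleton_iff]
        simp only [Finset.mem_insert, Finset.mem_singleton] at hk
        tauto
      obtain ⟨t, ht⟩ := this
      exact ⟨t, Finset.mem_univ t, ht⟩
    · intro t _
      rfl
  have h1 : ∑ k ∈ ({i, j} : Finset (Fin N)), F k = F i + F j := Finset.sum_pair hij
  rw [← Finset.sum_add_sum_compl ({i, j} : Finset (Fin N)) F, h1, h2]

lemma wt_split {N K : ℕ} {i j : Fin N} (hij : i ≠ j)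
    {f : Fin K → Fin N} (hf : Function.Injective f)
    (hr : Set.range f = ({i, j} : Set (Fin N))ᶜ) (v : Fin N → ZMod 2) :
    wt v = (if v i ≠ 0 then 1 else 0) + (if v j ≠ 0 then 1 else 0) + wt (v ∘ f) := by
  rw [wt_eq_sum, wt_eq_sum]
  exact sum_split hij hf hr _

lemma inn_split {N K : ℕ} {i j : Fin N} (hij : i ≠ j)
    {f : Fin K → Fin N} (hf : Function.Injective f)
    (hr : Set.range f = ({i, j} : Set (Fin N))ᶜ) (v w : Fin N → ZMod 2) :
    inn v w = v i * w i + v j * w j + inn (v ∘ f) (w ∘ f) := by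
  rw [inn, inn]
  exact sum_split hij hf hr _

end SD

open SD in
theorem stmt_14 (n d s : ℕ) (hd4 : d % 4 = 0) (hd0 : d ≠ 0) (hs : 3 ≤ s)
    (C : Submodule (ZMod 2) (Fin (4*n+2) → ZMod 2))
    (hsd : IsSelfDual C) (hT : ∃ c ∈ C, wt c % 4 = 2)
    (hmin : HasMinDist C (d+2))
    (hsmin : (∃ y ∈ shadow C, wt y = s) ∧ ∀ y ∈ shadow C, s ≤ wt y) :
    ∃ i j : Fin (4*n+2), i ≠ j ∧
      ∀ f : Fin (4*n) → Fin (4*n+2), Function.Injective f →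
        Set.range f = ({i, j} : Set (Fin (4*n+2)))ᶜ →
        ∀ C' : Submodule (ZMod 2) (Fin (4*n) → ZMod 2),
          (C' : Set (Fin (4*n) → ZMod 2)) = {x | ∃ c ∈ C, c i = c j ∧ x = c ∘ f} →
          (∀ y ∈ shadow C', wt y % 4 = (s - 1) % 4) ∧
          (∃ y ∈ shadow C', wt y = s - 1) ∧
          ((∃ y ∈ shadow C', wt y = s - 1) ∧ ∀ y ∈ shadow C', s - 1 ≤ wt y) := by
  classical
  obtain ⟨⟨y, hyS, hys⟩, hsmin2⟩ := hsmin
  obtain ⟨cmin, hcmin, hcne, hcwt⟩ := hmin.1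
  have hwtle : ∀ v : Fin (4*n+2) → ZMod 2, wt v ≤ 4*n+2 := by
    intro v
    have := Finset.card_filter_le Finset.univ (fun i => v i ≠ 0)
    simpa [wt] using this
  have hd6 : 4 ≤ d := by omega
  have hn : 0 < n := by have := hwtle cmin; omega
  have hyodd : wt y % 2 = 1 := SD.shadow_wt_odd hsd hyS (by omega)
  have hyi : ∃ i, y i ≠ 0 := by
    by_contra h
    push_neg at h
    have : wt y = 0 := by
      rw [wt, Finset.card_eq_zero, Finset.filter_eq_empty_iff]
      intro k _
      simp [h k]
    omega
  obtain ⟨i, hi0⟩ := hyi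
  have hyi1 : y i = 1 := by rcases SD.zcases (y i) with h | h; exact absurd h hi0; exact h
  have hyj : ∃ j, y j = 0 := by
    by_contra h
    push_neg at h
    have : wt y = 4*n+2 := by
      rw [wt, Finset.filter_true_of_mem (fun k _ => h k)]
      simp
    omega
  obtain ⟨j, hj0⟩ := hyj
  have hij : i ≠ j := by
    intro h
    rw [h, hj0] at hyi1
    exact absurd hyi1 (by decide)
  refine ⟨i, j, hij, ?_⟩
  intro f hfinj hfr C' hC'
  haveI : Nonempty (Fin (4*n)) := ⟨⟨0, by omega⟩⟩
  have WS := SD.wt_split hij hfinj hfr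
  have IS := SD.inn_split hij hfinj hfr
  have hmemC' : ∀ x, x ∈ C' ↔ ∃ c ∈ C, c i = c j ∧ x = c ∘ f := by
    intro x
    rw [← SetLike.mem_coe, hC']
    exact Iff.rfl
  have hfne : ∀ t, f t ≠ i ∧ f t ≠ j := by
    intro t
    have : f t ∈ Set.range f := Set.mem_range_self t
    rw [hfr] at this
    simp only [Set.mem_compl_iff, Set.mem_insert_iff, Set.mem_singleton_iff] at this
    tauto
  -- a codeword separating i and j
  have hz : ∃ z ∈ C, z i + z j = 1 := by
    by_contra h
    push_neg at h
    have hall : ∀ z ∈ C, z i + z j = 0 := by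
      intro z hz
      rcases SD.zcases (z i + z j) with h' | h'
      · exact h'
      · exact absurd h' (h z hz)
    set e : Fin (4*n+2) → ZMod 2 := fun k => if k = i then 1 else if k = j then 1 else 0 with he
    have hef : e ∘ f = 0 := by
      funext t
      have := hfne t
      show (if f t = i then (1:ZMod 2) else if f t = j then 1 else 0) = 0
      rw [if_neg this.1, if_neg this.2]
    have hei : e i = 1 := by simp [he]
    have hej : e j = 1 := by simp [he, hij.symm]
    have heC : e ∈ C := by
      rw [hsd]
      intro c hc
      have := IS e c
      rw [hef] at this
      rw [this, hei, hej, SD.inn_zero_left, add_zero, one_mul, one_mul]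
      exact hall c hc
    have hewt : wt e = 2 := by
      have := WS e
      rw [hef, SD.wt_zero, hei, hej] at this
      simpa using this
    have hene : e ≠ 0 := by
      intro h0
      rw [h0, SD.wt_zero] at hewt
      omega
    have := hmin.2 e heC hene
    omega
  -- C' is self-dual
  have hsd' : IsSelfDual C' := by
    set ρ : (Fin (4*n+2) → ZMod 2) →ₗ[ZMod 2] (Fin (4*n) → ZMod 2) :=
      LinearMap.funLeft (ZMod 2) (ZMod 2) f with hρ
    have hρa : ∀ v, ρ v = v ∘ f := fun v => rfl
    set lam : (Fin (4*n+2) → ZMod 2) →ₗ[ZMod 2] ZMod 2 :=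
      (LinearMap.proj i : (Fin (4*n+2) → ZMod 2) →ₗ[ZMod 2] ZMod 2)
        + (LinearMap.proj j : (Fin (4*n+2) → ZMod 2) →ₗ[ZMod 2] ZMod 2) with hlam
    have hlama : ∀ v, lam v = v i + v j := fun v => rfl
    set Cij := C ⊓ LinearMap.ker lam with hCij
    have hCijmem : ∀ x, x ∈ Cij ↔ x ∈ C ∧ x i = x j := by
      intro x
      rw [hCij, Submodule.mem_inf, LinearMap.mem_ker, hlama, SD.addeq]
    -- finrank C
    have hfrC : Module.finrank (ZMod 2) C = 2*n+1 := by
      have := SD.sd_finrank hsd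
      omega
    -- finrank Cij
    have hfrCij : Module.finrank (ZMod 2) Cij = 2*n := by
      obtain ⟨z, hzC, hz1⟩ := hz
      have hsur : ∃ x : C, lam.domRestrict C x = 1 := ⟨⟨z, hzC⟩, hz1⟩
      have h1 := SD.finrank_ker_functional (lam.domRestrict C) hsur
      have h2 : Submodule.map C.subtype (LinearMap.ker (lam.domRestrict C)) = Cij := by
        ext x
        constructor
        · rintro ⟨⟨c, hc⟩, hk, rfl⟩
          have hk' : lam c = 0 := hk
          rw [hCijmem]
          exact ⟨hc, SD.addeq.mp (by rw [← hlama]; exact hk')⟩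
        · intro hx
          obtain ⟨hxC, hxij⟩ := (hCijmem x).mp hx
          refine ⟨⟨x, hxC⟩, ?_, rfl⟩
          show lam x = 0
          rw [hlama]
          exact SD.addeq.mpr hxij
      have h3 := Submodule.finrank_map_subtype_eq C (LinearMap.ker (lam.domRestrict C))
      rw [h2] at h3
      omega
    -- C' = map ρ Cij
    have hC'm : C' = Submodule.map ρ Cij := by
      ext x
      rw [hmemC', Submodule.mem_map]
      constructor
      · rintro ⟨c, hc, hcij, rfl⟩
        exact ⟨c, (hCijmem c).mpr ⟨hc, hcij⟩, rfl⟩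
      · rintro ⟨c, hc, rfl⟩
        obtain ⟨h1, h2⟩ := (hCijmem c).mp hc
        exact ⟨c, h1, h2, rfl⟩
    -- finrank C'
    have hkerb : LinearMap.ker (ρ.domRestrict Cij) = ⊥ := by
      rw [LinearMap.ker_eq_bot']
      rintro ⟨x, hx⟩ hk
      have hxf : x ∘ f = 0 := hk
      obtain ⟨hxC, hxij⟩ := (hCijmem x).mp hx
      have hw := WS x
      rw [hxf, SD.wt_zero] at hw
      have hle2 : wt x ≤ 2 := by split_ifs at hw <;> omega
      have hx0 : x = 0 := by
        by_contra hne
        have := hmin.2 x hxC hne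
        omega
      exact Subtype.ext hx0
    have hfrC' : Module.finrank (ZMod 2) C' = 2*n := by
      have h1 := LinearMap.finrank_range_add_finrank_ker (ρ.domRestrict Cij)
      rw [hkerb, finrank_bot, LinearMap.range_domRestrict] at h1
      rw [hC'm]
      omega
    -- C' self-orthogonal
    have hC'le : C' ≤ SD.dualCode C' := by
      intro x hx
      rw [SD.mem_dualCode]
      intro x' hx'
      obtain ⟨c, hc, hcij, rfl⟩ := (hmemC' x).mp hx
      obtain ⟨c', hc', hcij', rfl⟩ := (hmemC' x').mp hx'
      have hthis := IS c c'
      have h0 : inn c c' = 0 := SD.sd_inn hsd hc hc'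
      rw [h0, ← hcij, ← hcij', CharTwo.add_self_eq_zero, zero_add] at hthis
      exact hthis.symm
    have hfrd : Module.finrank (ZMod 2) (SD.dualCode C') = 2*n := by
      rw [SD.finrank_dualCode, hfrC']
      omega
    have hC'eq : C' = SD.dualCode C' :=
      Submodule.eq_of_le_of_finrank_le hC'le (by omega)
    intro v
    constructor
    · intro hv c hc
      have : v ∈ SD.dualCode C' := hC'eq ▸ hv
      exact this c hc
    · intro h
      rw [hC'eq]
      exact h
  -- y restricted
  set y' : Fin (4*n) → ZMod 2 := y ∘ f with hy'def
  have hy'wt : wt y' + 1 = s := by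
    have := WS y
    rw [hyi1, hj0] at this
    rw [if_pos (by decide : (1:ZMod 2) ≠ 0)] at this
    rw [if_neg (by simp : ¬ (0:ZMod 2) ≠ 0)] at this
    rw [← hy'def] at this
    omega
  have hy'S : y' ∈ shadow C' := by
    constructor
    · -- orthogonal to doubly-even subcode of C'
      intro x hx h4
      obtain ⟨c, hc, hcij, rfl⟩ := (hmemC' x).mp hx
      have hwt := WS c
      have hinn := IS y c
      rw [hyi1, hj0, one_mul, zero_mul, add_zero] at hinn
      rcases SD.zcases (c i) with h | h
      · have h4c : wt c % 4 = 0 := by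
          rw [h, ← hcij, h] at hwt
          rw [if_neg (by simp : ¬ (0:ZMod 2) ≠ 0)] at hwt
          omega
        have h0 := hyS.1 c hc h4c
        rw [h0, h, zero_add] at hinn
        exact hinn.symm
      · have h4c : wt c % 4 = 2 := by
          rw [h, ← hcij, h] at hwt
          rw [if_pos (by decide : (1:ZMod 2) ≠ 0)] at hwt
          omega
        have h1 := SD.shadow_inn_odd hsd hyS hc h4c
        rw [h1, h] at hinn
        -- hinn : 1 = 1 + inn (y ∘ f) (c ∘ f)
        rcases SD.zcases (inn (y ∘ f) (c ∘ f)) with h' | h'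
        · exact h'
        · rw [h'] at hinn
          exact absurd hinn (by decide)
    · -- not in C'
      intro hmem
      obtain ⟨c, hc, hcij, hcf⟩ := (hmemC' y').mp hmem
      set e : Fin (4*n+2) → ZMod 2 := y + c with he
      have hef : e ∘ f = 0 := by
        funext t
        have h1 : y (f t) = c (f t) := congrFun hcf t
        show y (f t) + c (f t) = 0
        rw [h1, CharTwo.add_self_eq_zero]
      have hei : e i = 1 + c i := by rw [he, Pi.add_apply, hyi1]
      have hej : e j = c i := by rw [he, Pi.add_apply, hj0, zero_add, hcij]
      have hewt : wt e = 1 := by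
        have hw := WS e
        rw [hef, SD.wt_zero, hei, hej] at hw
        rcases SD.zcases (c i) with h | h <;> rw [h] at hw
        · rw [if_pos (by decide : (1:ZMod 2) + 0 ≠ 0),
            if_neg (by simp : ¬ (0:ZMod 2) ≠ 0)] at hw
          omega
        · rw [if_neg (by decide : ¬ (1:ZMod 2) + 1 ≠ 0),
            if_pos (by decide : (1:ZMod 2) ≠ 0)] at hw
          omega
      have hene : e ≠ 0 := by
        intro h0
        rw [h0, SD.wt_zero] at hewt
        omega
      have heC : e ∉ C := by
        intro hmem2
        have := hmin.2 e hmem2 hene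
        omega
      have heS : e ∈ shadow C := by
        refine ⟨?_, heC⟩
        intro c₀ h1 h2
        rw [he, SD.inn_add_left, hyS.1 c₀ h1 h2, SD.sd_inn hsd hc h1, add_zero]
      have := hsmin2 e heS
      omega
  -- C' is Type I
  have hT' : ∃ c' ∈ C', wt c' % 4 = 2 := by
    by_contra hno
    push_neg at hno
    have hall : ∀ x ∈ C', wt x % 4 = 0 := by
      intro x hx
      have he := SD.sd_wt_even hsd' hx
      have := hno x hx
      omega
    exact hy'S.2 ((hsd' y').mpr (fun c hc => hy'S.1 c hc (hall c hc)))
  -- the congruence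
  have hcong : ∀ u ∈ shadow C', wt u % 4 = (s-1) % 4 := by
    intro u hu
    have := SD.shadow_wt_cong hsd' hT' hu hy'S
    omega
  -- the lower bound
  have hlow : ∀ u ∈ shadow C', s - 1 ≤ wt u := by
    intro u hu
    have hP00 : ∀ c ∈ C, wt c % 4 = 0 → c i = 0 → c j = 0 → inn u (c ∘ f) = 0 := by
      intro c hc h4 hi' hj'
      have hcf : c ∘ f ∈ C' := (hmemC' _).mpr ⟨c, hc, by rw [hi', hj'], rfl⟩
      have hwt := WS c
      rw [hi', hj'] at hwt
      rw [if_neg (by simp : ¬ (0:ZMod 2) ≠ 0)] at hwt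
      exact hu.1 (c ∘ f) hcf (by omega)
    have hcomp : ∀ c c' : Fin (4*n+2) → ZMod 2, (c + c') ∘ f = c ∘ f + c' ∘ f :=
      fun c c' => rfl
    have hstep : ∀ c ∈ C, wt c % 4 = 0 → ∀ c1 ∈ C, wt c1 % 4 = 0 → ∀ c2 ∈ C, wt c2 % 4 = 0 →
        c i = c1 i + c2 i → c j = c1 j + c2 j →
        inn u (c ∘ f) = inn u (c1 ∘ f) + inn u (c2 ∘ f) := by
      intro c hc h4 c1 hc1 h41 c2 hc2 h42 hi' hj'
      have hmem3 : c + c1 + c2 ∈ C := C.add_mem (C.add_mem hc hc1) hc2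
      have h43 : wt (c + c1 + c2) % 4 = 0 := by
        have e1 := SD.sd_wt_add4 hsd (C.add_mem hc hc1) hc2
        have e2 := SD.sd_wt_add4 hsd hc hc1
        omega
      have hkey : ∀ p q : ZMod 2, (p + q) + p + q = 0 := by decide
      have hzi : (c + c1 + c2) i = 0 := by
        show c i + c1 i + c2 i = 0
        rw [hi']; exact hkey _ _
      have hzj : (c + c1 + c2) j = 0 := by
        show c j + c1 j + c2 j = 0
        rw [hj']; exact hkey _ _
      have h0 := hP00 _ hmem3 h43 hzi hzj
      rw [hcomp, hcomp, SD.inn_add_right, SD.inn_add_right] at h0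
      exact (by decide : ∀ p q r : ZMod 2, p + q + r = 0 → p = q + r) _ _ _ h0
    have h0C : (0 : Fin (4*n+2) → ZMod 2) ∈ C := C.zero_mem
    have h0wt : wt (0 : Fin (4*n+2) → ZMod 2) % 4 = 0 := by rw [SD.wt_zero]
    have h0f : inn u ((0 : Fin (4*n+2) → ZMod 2) ∘ f) = 0 := by
      have h00 : (0 : Fin (4*n+2) → ZMod 2) ∘ f = 0 := rfl
      rw [h00, SD.inn_zero_right]
    have hkeyred : ∀ a b : ZMod 2,
        (∀ c ∈ C, wt c % 4 = 0 → c i = 1 → c j = 0 → inn u (c ∘ f) = a) →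
        (∀ c ∈ C, wt c % 4 = 0 → c i = 0 → c j = 1 → inn u (c ∘ f) = b) →
        (∀ c ∈ C, wt c % 4 = 0 → c i = 1 → c j = 1 → inn u (c ∘ f) = a + b) →
        ∀ c ∈ C, wt c % 4 = 0 → inn u (c ∘ f) + a * c i + b * c j = 0 := by
      intro a b H10 H01 H11 c hc h4
      rcases SD.zcases (c i) with hci | hci <;> rcases SD.zcases (c j) with hcj | hcj
      · rw [hci, hcj, hP00 c hc h4 hci hcj]
        exact (by decide : ∀ a b : ZMod 2, (0:ZMod 2) + a * 0 + b * 0 = 0) a b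
      · rw [hci, hcj, H01 c hc h4 hci hcj]
        exact (by decide : ∀ a b : ZMod 2, b + a * 0 + b * 1 = 0) a b
      · rw [hci, hcj, H10 c hc h4 hci hcj]
        exact (by decide : ∀ a b : ZMod 2, a + a * 1 + b * 0 = 0) a b
      · rw [hci, hcj, H11 c hc h4 hci hcj]
        exact (by decide : ∀ a b : ZMod 2, (a + b) + a * 1 + b * 1 = 0) a b
    have hab : ∃ a b : ZMod 2, ∀ c ∈ C, wt c % 4 = 0 →
        inn u (c ∘ f) + a * c i + b * c j = 0 := by
      by_cases h10 : ∃ c, c ∈ C ∧ wt c % 4 = 0 ∧ c i = 1 ∧ c j = 0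
      · obtain ⟨c10, hc10, h104, h10i, h10j⟩ := h10
        have H10 : ∀ c ∈ C, wt c % 4 = 0 → c i = 1 → c j = 0 →
            inn u (c ∘ f) = inn u (c10 ∘ f) := by
          intro c hc h4 hi' hj'
          have := hstep c hc h4 c10 hc10 h104 0 h0C h0wt
            (by simp [hi', h10i]) (by simp [hj', h10j])
          rw [h0f, add_zero] at this
          exact this
        by_cases h01 : ∃ c, c ∈ C ∧ wt c % 4 = 0 ∧ c i = 0 ∧ c j = 1
        · obtain ⟨c01, hc01, h014, h01i, h01j⟩ := h01
          have H01 : ∀ c ∈ C, wt c % 4 = 0 → c i = 0 → c j = 1 →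
              inn u (c ∘ f) = inn u (c01 ∘ f) := by
            intro c hc h4 hi' hj'
            have := hstep c hc h4 c01 hc01 h014 0 h0C h0wt
              (by simp [hi', h01i]) (by simp [hj', h01j])
            rw [h0f, add_zero] at this
            exact this
          refine ⟨inn u (c10 ∘ f), inn u (c01 ∘ f), hkeyred _ _ H10 H01 ?_⟩
          intro c hc h4 hi' hj'
          exact hstep c hc h4 c10 hc10 h104 c01 hc01 h014
            (by simp [hi', h10i, h01i]) (by simp [hj', h10j, h01j])
        · have h11 : ¬ ∃ c, c ∈ C ∧ wt c % 4 = 0 ∧ c i = 1 ∧ c j = 1 := by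
            rintro ⟨c11, hc11, h114, h11i, h11j⟩
            apply h01
            refine ⟨c11 + c10, C.add_mem hc11 hc10, ?_, ?_, ?_⟩
            · have := SD.sd_wt_add4 hsd hc11 hc10; omega
            · show c11 i + c10 i = 0; rw [h11i, h10i]; decide
            · show c11 j + c10 j = 1; rw [h11j, h10j]; decide
          refine ⟨inn u (c10 ∘ f), 0, hkeyred _ _ H10 ?_ ?_⟩
          · intro c hc h4 hi' hj'; exact absurd ⟨c, hc, h4, hi', hj'⟩ h01
          · intro c hc h4 hi' hj'; exact absurd ⟨c, hc, h4, hi', hj'⟩ h11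
      · by_cases h01 : ∃ c, c ∈ C ∧ wt c % 4 = 0 ∧ c i = 0 ∧ c j = 1
        · obtain ⟨c01, hc01, h014, h01i, h01j⟩ := h01
          have H01 : ∀ c ∈ C, wt c % 4 = 0 → c i = 0 → c j = 1 →
              inn u (c ∘ f) = inn u (c01 ∘ f) := by
            intro c hc h4 hi' hj'
            have := hstep c hc h4 c01 hc01 h014 0 h0C h0wt
              (by simp [hi', h01i]) (by simp [hj', h01j])
            rw [h0f, add_zero] at this
            exact this
          have h11 : ¬ ∃ c, c ∈ C ∧ wt c % 4 = 0 ∧ c i = 1 ∧ c j = 1 := by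
            rintro ⟨c11, hc11, h114, h11i, h11j⟩
            apply h10
            refine ⟨c11 + c01, C.add_mem hc11 hc01, ?_, ?_, ?_⟩
            · have := SD.sd_wt_add4 hsd hc11 hc01; omega
            · show c11 i + c01 i = 1; rw [h11i, h01i]; decide
            · show c11 j + c01 j = 0; rw [h11j, h01j]; decide
          refine ⟨0, inn u (c01 ∘ f), hkeyred _ _ ?_ H01 ?_⟩
          · intro c hc h4 hi' hj'; exact absurd ⟨c, hc, h4, hi', hj'⟩ h10
          · intro c hc h4 hi' hj'; exact absurd ⟨c, hc, h4, hi', hj'⟩ h11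
        · by_cases h11 : ∃ c, c ∈ C ∧ wt c % 4 = 0 ∧ c i = 1 ∧ c j = 1
          · obtain ⟨c11, hc11, h114, h11i, h11j⟩ := h11
            refine ⟨inn u (c11 ∘ f), 0, hkeyred _ _ ?_ ?_ ?_⟩
            · intro c hc h4 hi' hj'; exact absurd ⟨c, hc, h4, hi', hj'⟩ h10
            · intro c hc h4 hi' hj'; exact absurd ⟨c, hc, h4, hi', hj'⟩ h01
            · intro c hc h4 hi' hj'
              rw [add_zero]
              have := hstep c hc h4 c11 hc11 h114 0 h0C h0wt
                (by simp [hi', h11i]) (by simp [hj', h11j])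
              rw [h0f, add_zero] at this
              exact this
          · refine ⟨0, 0, hkeyred _ _ ?_ ?_ ?_⟩
            · intro c hc h4 hi' hj'; exact absurd ⟨c, hc, h4, hi', hj'⟩ h10
            · intro c hc h4 hi' hj'; exact absurd ⟨c, hc, h4, hi', hj'⟩ h01
            · intro c hc h4 hi' hj'; exact absurd ⟨c, hc, h4, hi', hj'⟩ h11
    obtain ⟨a, b, hH⟩ := hab
    set uh : Fin (4*n+2) → ZMod 2 :=
      fun k => if k = i then a else if k = j then b else u (Function.invFun f k) with huhdef
    have hugf : ∀ t, uh (f t) = u t := by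
      intro t
      have hn2 := hfne t
      show (if f t = i then a else if f t = j then b else u (Function.invFun f (f t))) = u t
      rw [if_neg hn2.1, if_neg hn2.2, Function.leftInverse_invFun hfinj t]
    have huf : uh ∘ f = u := funext hugf
    have hui : uh i = a := by
      show (if i = i then a else _) = a
      rw [if_pos rfl]
    have huj : uh j = b := by
      show (if j = i then a else if j = j then b else _) = b
      rw [if_neg (Ne.symm hij), if_pos rfl]
    have hshad : uh ∈ shadow C := by
      constructor
      · intro c hc h4
        have hI := IS uh c
        rw [huf, hui, huj] at hI
        rw [hI]
        exact (by decide : ∀ p q r : ZMod 2, r + p + q = 0 → p + q + r = 0) _ _ _ (hH c hc h4)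
      · intro hmem
        by_cases hab2 : a = b
        · apply hu.2
          rw [SetLike.mem_coe, hmemC']
          exact ⟨uh, hmem, by rw [hui, huj, hab2], huf.symm⟩
        · have hwt := WS uh
          rw [huf, hui, huj] at hwt
          have hone : ((if a ≠ 0 then 1 else 0) : ℕ) + (if b ≠ 0 then 1 else 0) = 1 := by
            rcases SD.zcases a with h|h <;> rcases SD.zcases b with h'|h'
            · exact absurd (h.trans h'.symm) hab2
            · rw [h, h']; decide
            · rw [h, h']; decide
            · exact absurd (h.trans h'.symm) hab2
          rw [hone] at hwt
          have hueven : wt u % 2 = 0 := SD.shadow_wt_even hsd' hu (by omega)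
          have hceven := SD.sd_wt_even hsd hmem
          omega
    have hge := hsmin2 uh hshad
    have hwt := WS uh
    rw [huf, hui, huj] at hwt
    have h2 : wt uh ≤ wt u + 2 := by split_ifs at hwt <;> omega
    have hc4 := hcong u hu
    omega
  exact ⟨hcong, ⟨y', hy'S, by omega⟩, ⟨⟨y', hy'S, by omega⟩, hlow⟩⟩
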